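/- Every non-degenerate symmetric bilinear form on a finite-dimensional vector space over F_2 is congruent to either the identity matrix I_n or (if n is even) the block-diagonal matrix λ_n consisting of n/2 copies of the 2×2 matrix [[0,1],[1,0]], and these two forms are not congruent to each other when both exist: the form I_n has a vector v with v·v = 1 while every vector v for λ_n satisfies v·v = 0. -/

import Mathlib

open Matrix

/-- The `n × n` matrix over `F_2` consisting of `n/2` diagonal blocks
`[[0,1],[1,0]]` (for `n` even): entry `(i,j)` is `1` iff `i` and `j` lie in the
same pair `{2k, 2k+1}` and `i ≠ j`. -/
def hypMat (n : ℕ) : Matrix (Fin n) (Fin n) (ZMod 2) :=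
  fun i j => if (i : ℕ) / 2 = (j : ℕ) / 2 ∧ i ≠ j then 1 else 0

namespace Stmt2Aux


/-- identity on first `a` coordinates, hyperbolic pairs afterwards -/
def mixMat (a n : ℕ) : Matrix (Fin n) (Fin n) (ZMod 2) :=
  Matrix.of fun i j =>
    if (i : ℕ) < a ∨ (j : ℕ) < a then (if i = j then 1 else 0)
    else if ((i : ℕ) - a) / 2 = ((j : ℕ) - a) / 2 ∧ i ≠ j then 1 else 0

def Cong {n : ℕ} (A B : Matrix (Fin n) (Fin n) (ZMod 2)) : Prop :=
  ∃ M, IsUnit M ∧ Mᵀ * A * M = B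

lemma Cong.refl {n : ℕ} (A : Matrix (Fin n) (Fin n) (ZMod 2)) : Cong A A :=
  ⟨1, isUnit_one, by simp⟩

lemma Cong.trans {n : ℕ} {A B C : Matrix (Fin n) (Fin n) (ZMod 2)}
    (h1 : Cong A B) (h2 : Cong B C) : Cong A C := by
  obtain ⟨M, hM, rfl⟩ := h1
  obtain ⟨N, hN, rfl⟩ := h2
  exact ⟨M * N, hM.mul hN, by simp [Matrix.transpose_mul, Matrix.mul_assoc]⟩

lemma isUnit_conj {n : ℕ} {A M : Matrix (Fin n) (Fin n) (ZMod 2)}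
    (hA : IsUnit A) (hM : IsUnit M) : IsUnit (Mᵀ * A * M) := by
  rw [Matrix.isUnit_iff_isUnit_det] at *
  simp only [Matrix.det_mul, Matrix.det_transpose]
  exact (hM.mul hA).mul hM

lemma cong_isUnit {n : ℕ} {A B : Matrix (Fin n) (Fin n) (ZMod 2)}
    (h : Cong A B) (hA : IsUnit A) : IsUnit B := by
  obtain ⟨M, hM, rfl⟩ := h; exact isUnit_conj hA hM

lemma isUnit_of_conj_eq {n : ℕ} {A B M : Matrix (Fin n) (Fin n) (ZMod 2)}
    (hA : IsUnit A) (hB : IsUnit B) (h : Mᵀ * A * M = B) : IsUnit M := by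
  rw [Matrix.isUnit_iff_isUnit_det] at *
  have hd := congrArg Matrix.det h
  simp only [Matrix.det_mul, Matrix.det_transpose] at hd
  rw [isUnit_iff_ne_zero] at *
  intro h0
  rw [h0] at hd
  simp at hd
  exact hB hd.symm

lemma isSymm_conj {n : ℕ} {A : Matrix (Fin n) (Fin n) (ZMod 2)}
    (hA : A.IsSymm) (M : Matrix (Fin n) (Fin n) (ZMod 2)) : (Mᵀ * A * M).IsSymm := by
  unfold Matrix.IsSymm
  rw [Matrix.transpose_mul, Matrix.transpose_mul, Matrix.transpose_transpose, hA.eq,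
    Matrix.mul_assoc]

lemma mixMat_isSymm (a n : ℕ) : (mixMat a n).IsSymm := by
  apply Matrix.IsSymm.ext
  intro i j
  simp only [mixMat, Matrix.of_apply]
  by_cases h : (i : ℕ) < a ∨ (j : ℕ) < a
  · rw [if_pos h, if_pos (Or.symm h)]
    simp [eq_comm]
  · rw [if_neg h, if_neg fun hc => h (Or.symm hc)]
    congr 1
    simp only [eq_iff_iff]
    constructor <;> rintro ⟨h1, h2⟩ <;> exact ⟨h1.symm, h2.symm⟩

lemma mixMat_of_ge {a n : ℕ} (h : n ≤ a) : mixMat a n = 1 := by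
  ext i j
  have : (i : ℕ) < a := lt_of_lt_of_le i.isLt h
  simp [mixMat, this, Matrix.one_apply]

lemma mixMat_zero (n : ℕ) : mixMat 0 n = hypMat n := by
  ext i j
  simp [mixMat, hypMat]

lemma cong_submatrix_perm {n : ℕ} (A : Matrix (Fin n) (Fin n) (ZMod 2))
    (σ : Equiv.Perm (Fin n)) : Cong A (A.submatrix σ σ) := by
  refine ⟨(σ.symm).toPEquiv.toMatrix, ?_, ?_⟩
  · rw [Matrix.isUnit_iff_isUnit_det]
    have hd : ((σ.symm).toPEquiv.toMatrix : Matrix (Fin n) (Fin n) (ZMod 2)).det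
        = ((Equiv.Perm.sign σ.symm : ℤ) : ZMod 2) := by
      exact_mod_cast Matrix.det_permutation σ.symm
    rw [hd]
    rcases Int.units_eq_one_or (Equiv.Perm.sign σ.symm) with h | h <;> simp [h]
  · have ht : ((σ.symm).toPEquiv.toMatrix : Matrix (Fin n) (Fin n) (ZMod 2))ᵀ
        = σ.toPEquiv.toMatrix := by
      rw [← PEquiv.toMatrix_symm, ← Equiv.toPEquiv_symm, Equiv.symm_symm]
    rw [ht, PEquiv.toMatrix_toPEquiv_mul, PEquiv.mul_toMatrix_toPEquiv, Equiv.symm_symm]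
    rw [Matrix.submatrix_submatrix]
    rfl



def delta {n : ℕ} (x : Fin n) : Fin n → ZMod 2 := fun i => if i = x then 1 else 0

/-- matrix whose `q`-th column is `e_q + A q • e_x + B q • e_y + C q • e_z` -/
def colOp {n : ℕ} (x y z : Fin n) (A B C : Fin n → ZMod 2) :
    Matrix (Fin n) (Fin n) (ZMod 2) :=
  Matrix.of fun i q => delta q i + A q * delta x i + B q * delta y i + C q * delta z i

lemma sum_mul_col {n : ℕ} (x y z q : Fin n) (A B C : Fin n → ZMod 2)
    (w : Fin n → ZMod 2) :
    (∑ j, w j * (delta q j + A q * delta x j + B q * delta y j + C q * delta z j))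
      = w q + A q * w x + B q * w y + C q * w z := by
  simp only [delta, mul_add, Finset.sum_add_distrib, mul_ite, mul_one, mul_zero,
    Finset.sum_ite_eq', Finset.mem_univ, if_true]
  ring

lemma colOp_conj {n : ℕ} (Λ : Matrix (Fin n) (Fin n) (ZMod 2)) (x y z : Fin n)
    (A B C : Fin n → ZMod 2) (p q : Fin n) :
    ((colOp x y z A B C)ᵀ * Λ * colOp x y z A B C) p q =
      Λ p q + A q * Λ p x + B q * Λ p y + C q * Λ p z
      + A p * (Λ x q + A q * Λ x x + B q * Λ x y + C q * Λ x z)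
      + B p * (Λ y q + A q * Λ y x + B q * Λ y y + C q * Λ y z)
      + C p * (Λ z q + A q * Λ z x + B q * Λ z y + C q * Λ z z) := by
  have h1 : ∀ i, (Λ * colOp x y z A B C) i q
      = Λ i q + A q * Λ i x + B q * Λ i y + C q * Λ i z := by
    intro i
    rw [Matrix.mul_apply]
    exact sum_mul_col x y z q A B C (fun j => Λ i j)
  rw [Matrix.mul_assoc, Matrix.mul_apply]
  simp only [Matrix.transpose_apply, h1]
  have h2 : ∀ i, (colOp x y z A B C) i p * (Λ i q + A q * Λ i x + B q * Λ i y + C q * Λ i z)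
      = (Λ i q + A q * Λ i x + B q * Λ i y + C q * Λ i z) *
        (delta p i + A p * delta x i + B p * delta y i + C p * delta z i) := by
    intro i; simp only [colOp, Matrix.of_apply]; ring
  rw [Finset.sum_congr rfl fun i _ => h2 i]
  rw [sum_mul_col x y z p A B C (fun j => Λ j q + A q * Λ j x + B q * Λ j y + C q * Λ j z)]

lemma colOp_isUnit {n : ℕ} (x y z : Fin n) (A B C : Fin n → ZMod 2)
    (hA : ∀ q, A q ≠ 0 → x < q) (hB : ∀ q, B q ≠ 0 → y < q)
    (hC : ∀ q, C q ≠ 0 → z < q) : IsUnit (colOp x y z A B C) := by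
  rw [Matrix.isUnit_iff_isUnit_det]
  have ht : (colOp x y z A B C).BlockTriangular id := by
    intro i q h
    simp only [id_eq] at h
    simp only [colOp, Matrix.of_apply, delta]
    have h1 : i ≠ q := fun hc => absurd (hc ▸ h) (lt_irrefl _)
    rw [if_neg h1]
    have hax : A q * (if i = x then (1:ZMod 2) else 0) = 0 := by
      by_cases hq : A q = 0
      · simp [hq]
      · have := hA q hq
        have : i ≠ x := fun hc => absurd (hc ▸ (this.trans h)) (lt_irrefl _)
        simp [this]
    have hby : B q * (if i = y then (1:ZMod 2) else 0) = 0 := by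
      by_cases hq : B q = 0
      · simp [hq]
      · have := hB q hq
        have : i ≠ y := fun hc => absurd (hc ▸ (this.trans h)) (lt_irrefl _)
        simp [this]
    have hcz : C q * (if i = z then (1:ZMod 2) else 0) = 0 := by
      by_cases hq : C q = 0
      · simp [hq]
      · have := hC q hq
        have : i ≠ z := fun hc => absurd (hc ▸ (this.trans h)) (lt_irrefl _)
        simp [this]
    rw [hax, hby, hcz]; ring
  rw [Matrix.det_of_upperTriangular ht]
  have hd : ∀ i, colOp x y z A B C i i = 1 := by
    intro i
    simp only [colOp, Matrix.of_apply, delta, if_pos rfl]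
    have hax : A i * (if i = x then (1:ZMod 2) else 0) = 0 := by
      by_cases hq : A i = 0
      · simp [hq]
      · have := hA i hq
        have : i ≠ x := fun hc => absurd (hc ▸ this) (lt_irrefl _)
        simp [this]
    have hby : B i * (if i = y then (1:ZMod 2) else 0) = 0 := by
      by_cases hq : B i = 0
      · simp [hq]
      · have := hB i hq
        have : i ≠ y := fun hc => absurd (hc ▸ this) (lt_irrefl _)
        simp [this]
    have hcz : C i * (if i = z then (1:ZMod 2) else 0) = 0 := by
      by_cases hq : C i = 0
      · simp [hq]
      · have := hC i hq
        have : i ≠ z := fun hc => absurd (hc ▸ this) (lt_irrefl _)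
        simp [this]
    rw [hax, hby, hcz]; simp
  simp [hd]

lemma mixMat_mul_self {a n : ℕ} (h : (n - a) % 2 = 0) :
    mixMat a n * mixMat a n = 1 := by
  ext p q
  rw [Matrix.mul_apply, Matrix.one_apply]
  by_cases hp : (p : ℕ) < a
  · have hrow : ∀ i, mixMat a n p i = if i = p then 1 else 0 := by
      intro i
      simp only [mixMat, Matrix.of_apply]
      rw [if_pos (Or.inl hp)]
      simp [eq_comm]
    simp only [hrow, ite_mul, one_mul, zero_mul, Finset.sum_ite_eq', Finset.mem_univ, if_true]
    simp [eq_comm]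
  · push_neg at hp
    obtain ⟨w, hw1, hw2⟩ : ∃ w, (w < n ∧ a ≤ w ∧ w ≠ (p : ℕ) ∧ (w - a) / 2 = ((p : ℕ) - a) / 2)
        ∧ ∀ m, m < n → a ≤ m →
          (((m - a) / 2 = ((p : ℕ) - a) / 2 ∧ ¬ m = (p : ℕ)) ↔ m = w) ∧
          (((m - a) / 2 = (w - a) / 2 ∧ ¬ m = w) ↔ m = (p : ℕ)) := by
      have hpn := p.isLt
      by_cases hpar : ((p : ℕ) - a) % 2 = 0
      · exact ⟨(p : ℕ) + 1, by omega, fun m h1 h2 => ⟨by omega, by omega⟩⟩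
      · exact ⟨(p : ℕ) - 1, by omega, fun m h1 h2 => ⟨by omega, by omega⟩⟩
    set p' : Fin n := ⟨w, hw1.1⟩ with hp'
    have K1 : ∀ i, mixMat a n p i = if i = p' then 1 else 0 := by
      intro i
      simp only [mixMat, Matrix.of_apply]
      by_cases hi : (i : ℕ) < a
      · rw [if_pos (Or.inr hi)]
        have h1 : ¬ p = i := by rw [Fin.ext_iff]; omega
        have h2 : ¬ i = p' := by rw [Fin.ext_iff]; simp only [hp']; omega
        simp [h1, h2]
      · push_neg at hi
        rw [if_neg (by omega)]
        have hiff : (((p : ℕ) - a) / 2 = ((i : ℕ) - a) / 2 ∧ p ≠ i) ↔ i = p' := by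
          have := (hw2 (i : ℕ) i.isLt hi).1
          simp only [ne_eq, Fin.ext_iff]
          have hpw : ((p' : Fin n) : ℕ) = w := rfl
          omega
        rw [if_congr hiff rfl rfl]
    have K2 : mixMat a n p' q = if q = p then 1 else 0 := by
      simp only [mixMat, Matrix.of_apply]
      by_cases hq : (q : ℕ) < a
      · rw [if_pos (Or.inr hq)]
        have h1 : ¬ p' = q := by rw [Fin.ext_iff]; simp only [hp']; omega
        have h2 : ¬ q = p := by rw [Fin.ext_iff]; omega
        simp [h1, h2]
      · push_neg at hq
        rw [if_neg (by have hpw : ((p' : Fin n) : ℕ) = w := rfl; omega)]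
        have hiff : (((p' : ℕ) - a) / 2 = ((q : ℕ) - a) / 2 ∧ p' ≠ q) ↔ q = p := by
          have := (hw2 (q : ℕ) q.isLt hq).2
          simp only [ne_eq, Fin.ext_iff, hp']
          omega
        rw [if_congr hiff rfl rfl]
    simp only [K1, ite_mul, one_mul, zero_mul, Finset.sum_ite_eq', Finset.mem_univ, if_true]
    rw [K2]
    simp [eq_comm]

lemma mixMat_isUnit {a n : ℕ} (h : (n - a) % 2 = 0) : IsUnit (mixMat a n) := by
  rw [Matrix.isUnit_iff_isUnit_det]
  have := congrArg Matrix.det (mixMat_mul_self h)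
  rw [Matrix.det_mul, Matrix.det_one] at this
  exact IsUnit.of_mul_eq_one _ this


lemma addself : ∀ u : ZMod 2, u + u = 0 := by decide

lemma notone : ∀ u : ZMod 2, u ≠ 1 → u = 0 := by decide

lemma mixMat_fst {a n : ℕ} (u v : Fin n) (h : (u : ℕ) < a ∨ (v : ℕ) < a) :
    mixMat a n u v = if u = v then 1 else 0 := by
  simp only [mixMat, Matrix.of_apply]; rw [if_pos h]

lemma mixMat_small_large {a b n : ℕ} (hb : b % 2 = 0) (p u : Fin n)
    (hp : (p : ℕ) < a + b) (hu : a + b ≤ (u : ℕ)) : mixMat a n p u = 0 := by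
  simp only [mixMat, Matrix.of_apply]
  by_cases h1 : (p : ℕ) < a
  · rw [if_pos (Or.inl h1)]
    have h2 : ¬ p = u := by rw [Fin.ext_iff]; omega
    simp [h2]
  · rw [if_neg (by omega), if_neg (by rintro ⟨h, -⟩; omega)]

lemma mixMat_large_small {a b n : ℕ} (hb : b % 2 = 0) (u p : Fin n)
    (hp : (p : ℕ) < a + b) (hu : a + b ≤ (u : ℕ)) : mixMat a n u p = 0 := by
  rw [(mixMat_isSymm a n).apply p u]
  exact mixMat_small_large hb p u hp hu

lemma mixMat_diag_zero {a n : ℕ} (i : Fin n) (hi : a ≤ (i : ℕ)) :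
    mixMat a n i i = 0 := by
  simp only [mixMat, Matrix.of_apply]
  rw [if_neg (by omega), if_neg (by rintro ⟨-, h⟩; exact h rfl)]

lemma swap_ge {n t : ℕ} (i j : Fin n) (hi : t ≤ (i : ℕ)) (hj : t ≤ (j : ℕ))
    (u : Fin n) (hu : t ≤ (u : ℕ)) : t ≤ ((Equiv.swap i j) u : ℕ) := by
  by_cases h1 : u = i
  · rw [h1, Equiv.swap_apply_left]; exact hj
  · by_cases h2 : u = j
    · rw [h2, Equiv.swap_apply_right]; exact hi
    · rw [Equiv.swap_apply_of_ne_of_ne h1 h2]; exact hu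

lemma swap_fix {n t : ℕ} (i j : Fin n) (hi : t ≤ (i : ℕ)) (hj : t ≤ (j : ℕ))
    (u : Fin n) (hu : (u : ℕ) < t) : (Equiv.swap i j) u = u := by
  refine Equiv.swap_apply_of_ne_of_ne ?_ ?_ <;> (simp only [ne_eq, Fin.ext_iff]; omega)

lemma swap_reg {a b n : ℕ} {Λ : Matrix (Fin n) (Fin n) (ZMod 2)} (hb : b % 2 = 0)
    (hreg : ∀ p q : Fin n, ((p : ℕ) < a + b ∨ (q : ℕ) < a + b) → Λ p q = mixMat a n p q)
    {i j : Fin n} (hi : a + b ≤ (i : ℕ)) (hj : a + b ≤ (j : ℕ)) :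
    ∀ p q : Fin n, ((p : ℕ) < a + b ∨ (q : ℕ) < a + b) →
      (Λ.submatrix (Equiv.swap i j) (Equiv.swap i j)) p q = mixMat a n p q := by
  intro p q hpq
  simp only [Matrix.submatrix_apply]
  rcases hpq with hp | hq
  · rw [swap_fix i j hi hj p hp]
    by_cases hq2 : (q : ℕ) < a + b
    · rw [swap_fix i j hi hj q hq2]; exact hreg p q (Or.inl hp)
    · rw [hreg p _ (Or.inl hp), mixMat_small_large hb p _ hp
        (swap_ge i j hi hj q (by omega)), mixMat_small_large hb p q hp (by omega)]
  · rw [swap_fix i j hi hj q hq]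
    by_cases hp2 : (p : ℕ) < a + b
    · rw [swap_fix i j hi hj p hp2]; exact hreg p q (Or.inr hq)
    · rw [hreg _ q (Or.inr hq), mixMat_large_small hb _ q hq
        (swap_ge i j hi hj p (by omega)), mixMat_large_small hb p q hq (by omega)]

lemma mix_shift {a n : ℕ} (ha : 1 ≤ a) (p q : Fin n)
    (hp : (p : ℕ) < a - 1 ∨ a + 2 ≤ (p : ℕ)) (hq : (q : ℕ) < a - 1 ∨ a + 2 ≤ (q : ℕ)) :
    mixMat a n p q = mixMat (a + 2) n p q := by
  have hcond : ((p : ℕ) < a ∨ (q : ℕ) < a) ↔ ((p : ℕ) < a + 2 ∨ (q : ℕ) < a + 2) := by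
    omega
  simp only [mixMat, Matrix.of_apply]
  by_cases hb : (p : ℕ) < a ∨ (q : ℕ) < a
  · rw [if_pos hb, if_pos (hcond.mp hb)]
  · have hcond2 : (((p : ℕ) - a) / 2 = ((q : ℕ) - a) / 2)
        ↔ (((p : ℕ) - (a + 2)) / 2 = ((q : ℕ) - (a + 2)) / 2) := by omega
    rw [if_neg hb, if_neg fun hc => hb (hcond.mpr hc)]
    exact if_congr (and_congr hcond2 Iff.rfl) rfl rfl

-- evaluation lemmas near the triple (x,y,z) = (a-1, a, a+1)
section eval
variable {a n : ℕ} (ha : 1 ≤ a) (h2 : a + 1 < n)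

lemma evalx (p : Fin n) : mixMat a n p ⟨a - 1, by omega⟩ = if p = ⟨a - 1, by omega⟩ then 1 else 0 := by
  simp only [mixMat, Matrix.of_apply]
  rw [if_pos (Or.inr (by simp; omega))]

lemma evaly (p : Fin n) : mixMat a n p ⟨a, by omega⟩ = if p = ⟨a + 1, by omega⟩ then 1 else 0 := by
  simp only [mixMat, Matrix.of_apply]
  by_cases hp : (p : ℕ) < a
  · rw [if_pos (Or.inl hp)]
    have h1 : ¬ p = (⟨a, by omega⟩ : Fin n) := by rw [Fin.ext_iff]; simpa using by omega
    have h3 : ¬ p = (⟨a + 1, by omega⟩ : Fin n) := by rw [Fin.ext_iff]; simpa using by omega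
    simp [h1, h3]
  · rw [if_neg (by simp; omega)]
    refine if_congr ?_ rfl rfl
    simp only [ne_eq, Fin.ext_iff]
    omega

lemma evalz (p : Fin n) : mixMat a n p ⟨a + 1, h2⟩ = if p = ⟨a, by omega⟩ then 1 else 0 := by
  simp only [mixMat, Matrix.of_apply]
  by_cases hp : (p : ℕ) < a
  · rw [if_pos (Or.inl hp)]
    have h1 : ¬ p = (⟨a + 1, h2⟩ : Fin n) := by rw [Fin.ext_iff]; simpa using by omega
    have h3 : ¬ p = (⟨a, by omega⟩ : Fin n) := by rw [Fin.ext_iff]; simpa using by omega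
    simp [h1, h3]
  · rw [if_neg (by simp; omega)]
    refine if_congr ?_ rfl rfl
    simp only [ne_eq, Fin.ext_iff]
    omega

end eval


lemma fixStep {a n : ℕ} (ha : 1 ≤ a) (h2 : a + 1 < n) (hpar : (n - a) % 2 = 0) :
    Cong (mixMat a n) (mixMat (a + 2) n) := by
  have hx : a - 1 < n := by omega
  have hy : a < n := by omega
  set x : Fin n := ⟨a - 1, hx⟩ with hxdef
  set y : Fin n := ⟨a, hy⟩ with hydef
  set z : Fin n := ⟨a + 1, h2⟩ with hzdef
  have hxy : x ≠ y := by simp only [ne_eq, hxdef, hydef, Fin.mk.injEq]; omega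
  have hxz : x ≠ z := by simp only [ne_eq, hxdef, hzdef, Fin.mk.injEq]; omega
  have hyz : y ≠ z := by simp only [ne_eq, hydef, hzdef, Fin.mk.injEq]; omega
  have hyx := hxy.symm; have hzx := hxz.symm; have hzy := hyz.symm
  set A : Fin n → ZMod 2 := fun q => if q = y ∨ q = z then 1 else 0 with hA
  set B : Fin n → ZMod 2 := fun q => if q = x then 1 else 0 with hB
  have hs : ∀ u v : Fin n, mixMat a n u v = mixMat a n v u :=
    fun u v => (mixMat_isSymm a n).apply v u
  have E1 : ∀ p : Fin n, mixMat a n p x = if p = x then 1 else 0 := fun p => evalx ha h2 p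
  have E2 : ∀ p : Fin n, mixMat a n p y = if p = z then 1 else 0 := fun p => evaly h2 p
  have E3 : ∀ p : Fin n, mixMat a n p z = if p = y then 1 else 0 := fun p => evalz h2 p
  have F1 : ∀ p : Fin n, mixMat a n x p = if p = x then 1 else 0 := fun p => (hs x p).trans (E1 p)
  have F2 : ∀ p : Fin n, mixMat a n y p = if p = z then 1 else 0 := fun p => (hs y p).trans (E2 p)
  have F3 : ∀ p : Fin n, mixMat a n z p = if p = y then 1 else 0 := fun p => (hs z p).trans (E3 p)
  have G2 : ∀ u v : Fin n, (u : ℕ) < a + 2 → mixMat (a+2) n u v = if u = v then 1 else 0 := by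
    intro u v h; simp only [mixMat, Matrix.of_apply]; rw [if_pos (Or.inl h)]
  have G2' : ∀ u v : Fin n, (v : ℕ) < a + 2 → mixMat (a+2) n u v = if u = v then 1 else 0 := by
    intro u v h; simp only [mixMat, Matrix.of_apply]; rw [if_pos (Or.inr h)]
  have hxval : (x : ℕ) = a - 1 := rfl
  have hyval : (y : ℕ) = a := rfl
  have hzval : (z : ℕ) = a + 1 := rfl
  have hxv : (x : ℕ) < a + 2 := by omega
  have hyv : (y : ℕ) < a + 2 := by omega
  have hzv : (z : ℕ) < a + 2 := by omega
  have heq : (colOp x y z A B B)ᵀ * mixMat a n * colOp x y z A B B = mixMat (a + 2) n := by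
    ext p q
    rw [colOp_conj]
    by_cases hpx : p = x
    · subst hpx
      by_cases hqx : q = x
      · subst hqx; rw [G2 _ _ hxv]
        simp [hA, hB, E1, E2, E3, F1, F2, F3, hxy, hxz, hyx, hzx, hyz, hzy] <;> decide
      · by_cases hqy : q = y
        · subst hqy; rw [G2 _ _ hxv]
          simp [hA, hB, E1, E2, E3, F1, F2, F3, hxy, hxz, hyx, hzx, hyz, hzy] <;> decide
        · by_cases hqz : q = z
          · subst hqz; rw [G2 _ _ hxv]
            simp [hA, hB, E1, E2, E3, F1, F2, F3, hxy, hxz, hyx, hzx, hyz, hzy] <;> decide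
          · rw [G2 _ _ hxv]
            simp [hA, hB, E1, E2, E3, F1, F2, F3, hxy, hxz, hyx, hzx, hyz, hzy, hqx, hqy, hqz,
              Ne.symm hqx, Ne.symm hqy, Ne.symm hqz]
    · by_cases hpy : p = y
      · subst hpy
        by_cases hqx : q = x
        · subst hqx; rw [G2 _ _ hyv]
          simp [hA, hB, E1, E2, E3, F1, F2, F3, hxy, hxz, hyx, hzx, hyz, hzy] <;> decide
        · by_cases hqy : q = y
          · subst hqy; rw [G2 _ _ hyv]
            simp [hA, hB, E1, E2, E3, F1, F2, F3, hxy, hxz, hyx, hzx, hyz, hzy] <;> decide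
          · by_cases hqz : q = z
            · subst hqz; rw [G2 _ _ hyv]
              simp [hA, hB, E1, E2, E3, F1, F2, F3, hxy, hxz, hyx, hzx, hyz, hzy] <;> decide
            · rw [G2 _ _ hyv]
              simp [hA, hB, E1, E2, E3, F1, F2, F3, hxy, hxz, hyx, hzx, hyz, hzy, hqx, hqy, hqz,
                Ne.symm hqx, Ne.symm hqy, Ne.symm hqz]
      · by_cases hpz : p = z
        · subst hpz
          by_cases hqx : q = x
          · subst hqx; rw [G2 _ _ hzv]
            simp [hA, hB, E1, E2, E3, F1, F2, F3, hxy, hxz, hyx, hzx, hyz, hzy] <;> decide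
          · by_cases hqy : q = y
            · subst hqy; rw [G2 _ _ hzv]
              simp [hA, hB, E1, E2, E3, F1, F2, F3, hxy, hxz, hyx, hzx, hyz, hzy] <;> decide
            · by_cases hqz : q = z
              · subst hqz; rw [G2 _ _ hzv]
                simp [hA, hB, E1, E2, E3, F1, F2, F3, hxy, hxz, hyx, hzx, hyz, hzy] <;> decide
              · rw [G2 _ _ hzv]
                simp [hA, hB, E1, E2, E3, F1, F2, F3, hxy, hxz, hyx, hzx, hyz, hzy, hqx, hqy, hqz,
                  Ne.symm hqx, Ne.symm hqy, Ne.symm hqz]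
        · -- p outside the triple
          by_cases hqx : q = x
          · subst hqx; rw [G2' _ _ hxv]
            simp [hA, hB, E1, E2, E3, F1, F2, F3, hxy, hxz, hyx, hzx, hyz, hzy, hpx, hpy, hpz]
          · by_cases hqy : q = y
            · subst hqy; rw [G2' _ _ hyv]
              simp [hA, hB, E1, E2, E3, F1, F2, F3, hxy, hxz, hyx, hzx, hyz, hzy, hpx, hpy, hpz]
            · by_cases hqz : q = z
              · subst hqz; rw [G2' _ _ hzv]
                simp [hA, hB, E1, E2, E3, F1, F2, F3, hxy, hxz, hyx, hzx, hyz, hzy, hpx, hpy, hpz]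
              · have hmix := mix_shift (n := n) ha p q
                  (by rw [Fin.ext_iff] at hpx hpy hpz; simp [hxdef, hydef, hzdef] at hpx hpy hpz; omega)
                  (by rw [Fin.ext_iff] at hqx hqy hqz; simp [hxdef, hydef, hzdef] at hqx hqy hqz; omega)
                rw [← hmix]
                simp [hA, hB, hpx, hpy, hpz, hqx, hqy, hqz]
  exact ⟨_, isUnit_of_conj_eq (mixMat_isUnit hpar) (mixMat_isUnit (by omega)) heq, heq⟩


lemma mainLemma : ∀ m a b n (Λ : Matrix (Fin n) (Fin n) (ZMod 2)),
    a + b + m = n → b % 2 = 0 → Λ.IsSymm → IsUnit Λ →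
    (∀ p q : Fin n, ((p : ℕ) < a + b ∨ (q : ℕ) < a + b) → Λ p q = mixMat a n p q) →
    (b ≠ 0 → ∀ i : Fin n, a ≤ (i : ℕ) → Λ i i = 0) →
    ∃ a', a ≤ a' ∧ a' ≤ n ∧ (n - a') % 2 = 0 ∧ Cong Λ (mixMat a' n) := by
  intro m
  induction m using Nat.strong_induction_on with
  | _ m IH =>
  intro a b n Λ hmn hb hsym hunit hreg halt
  rcases Nat.eq_zero_or_pos m with hm0 | hmpos
  · refine ⟨a, le_refl a, by omega, by omega, ?_⟩
    have hΛ : Λ = mixMat a n := by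
      ext p q
      exact hreg p q (Or.inl (by omega))
    rw [hΛ]; exact Cong.refl _
  · have hcn : a + b < n := by omega
    set xc : Fin n := ⟨a + b, hcn⟩ with hxcdef
    have hxcv : (xc : ℕ) = a + b := rfl
    by_cases hdiag : ∃ i : Fin n, a + b ≤ (i : ℕ) ∧ Λ i i = 1
    · -- CASE 1 : peel off an orthonormal vector
      obtain ⟨i, hic, hii⟩ := hdiag
      have hb0 : b = 0 := by
        by_contra hbne
        have h0 := halt hbne i (by omega)
        rw [h0] at hii
        exact absurd hii (by decide)
      have cong1 := cong_submatrix_perm Λ (Equiv.swap i xc)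
      have hreg1 := swap_reg hb hreg (i := i) (j := xc) (by omega) (by omega)
      have hsym1 : (Λ.submatrix (Equiv.swap i xc) (Equiv.swap i xc)).IsSymm :=
        Matrix.IsSymm.ext fun p q => by
          simp only [Matrix.submatrix_apply]; exact hsym.apply _ _
      have h11 : (Λ.submatrix (Equiv.swap i xc) (Equiv.swap i xc)) xc xc = 1 := by
        simp only [Matrix.submatrix_apply, Equiv.swap_apply_right]; exact hii
      set Λ₁ := Λ.submatrix (Equiv.swap i xc) (Equiv.swap i xc) with hΛ₁
      have hunit1 : IsUnit Λ₁ := cong_isUnit cong1 hunit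
      set Aq : Fin n → ZMod 2 := fun q => if (q : ℕ) ≤ a + b then 0 else Λ₁ xc q with hAq
      set zf : Fin n → ZMod 2 := fun _ => 0 with hzf
      have hM2 : IsUnit (colOp xc xc xc Aq zf zf) := by
        refine colOp_isUnit _ _ _ _ _ _ ?_ ?_ ?_ <;> intro q hq
        · by_cases hle : (q : ℕ) ≤ a + b
          · exfalso; apply hq; rw [hAq]; simp only; rw [if_pos hle]
          · rw [Fin.lt_def]; omega
        · exact absurd rfl hq
        · exact absurd rfl hq
      set M₂ := colOp xc xc xc Aq zf zf with hM₂def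
      set Λ₂ := M₂ᵀ * Λ₁ * M₂ with hΛ₂
      have key : ∀ p q, Λ₂ p q = Λ₁ p q + Aq q * Λ₁ p xc
          + Aq p * (Λ₁ xc q + Aq q * Λ₁ xc xc) := by
        intro p q
        rw [hΛ₂, hM₂def, colOp_conj]
        rw [hzf]
        ring
      have cong2 : Cong Λ₁ Λ₂ := ⟨M₂, hM2, rfl⟩
      have hsym2 : Λ₂.IsSymm := isSymm_conj hsym1 M₂
      have hunit2 : IsUnit Λ₂ := isUnit_conj hunit1 hM2
      have haux : ∀ p q : Fin n, (p : ℕ) < a + b + 1 → Λ₂ p q = mixMat (a + 1) n p q := by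
        intro p q hp
        rw [key p q]
        by_cases hp1 : (p : ℕ) < a + b
        · have e1 : Aq p = 0 := by rw [hAq]; simp only; rw [if_pos (by omega)]
          have h1 : Λ₁ p xc = 0 := by
            rw [hreg1 p xc (Or.inl hp1)]
            exact mixMat_small_large hb p xc hp1 (by omega)
          rw [e1, h1, hreg1 p q (Or.inl hp1)]
          rw [mixMat_fst p q (Or.inl (by omega)), mixMat_fst p q (Or.inl (by omega))]
          ring
        · have hpxc : p = xc := Fin.ext (by omega)
          subst hpxc
          have e1 : Aq xc = 0 := by rw [hAq]; simp only; rw [if_pos (by omega)]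
          rw [e1, h11]
          by_cases hq1 : (q : ℕ) ≤ a + b
          · have f1 : Aq q = 0 := by rw [hAq]; simp only; rw [if_pos hq1]
            rw [f1]
            by_cases hq2 : (q : ℕ) < a + b
            · rw [hreg1 xc q (Or.inr hq2)]
              rw [mixMat_fst xc q (Or.inr (by omega)), mixMat_fst xc q (Or.inl (by omega))]
              ring
            · have hqxc : q = xc := Fin.ext (by omega)
              subst hqxc
              rw [h11, mixMat_fst xc xc (Or.inl (by omega))]
              simp
          · have f1 : Aq q = Λ₁ xc q := by rw [hAq]; simp only; rw [if_neg hq1]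
            rw [f1, mixMat_fst xc q (Or.inl (by omega))]
            have hne : ¬ xc = q := by simp only [Fin.ext_iff]; omega
            rw [if_neg hne]
            generalize Λ₁ xc q = u
            revert u; decide
      have hreg2 : ∀ p q : Fin n, ((p : ℕ) < (a + 1) + 0 ∨ (q : ℕ) < (a + 1) + 0) →
          Λ₂ p q = mixMat (a + 1) n p q := by
        intro p q hpq
        rcases hpq with hp | hq
        · exact haux p q (by omega)
        · rw [hsym2.apply q p, haux q p (by omega)]
          exact (mixMat_isSymm (a + 1) n).apply p q
      obtain ⟨a', ha'1, ha'2, ha'3, hcong⟩ := IH (m - 1) (by omega) (a + 1) 0 n Λ₂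
        (by omega) (by omega) hsym2 hunit2 hreg2 (fun h => absurd rfl h)
      exact ⟨a', by omega, ha'2, ha'3, (cong1.trans cong2).trans hcong⟩
    · -- CASE 2 : peel off a hyperbolic pair
      have halt2 : ∀ i : Fin n, a ≤ (i : ℕ) → Λ i i = 0 := by
        intro i hi
        by_cases h1 : (i : ℕ) < a + b
        · rw [hreg i i (Or.inl h1)]; exact mixMat_diag_zero i hi
        · exact notone _ (fun h => hdiag ⟨i, by omega, h⟩)
      have hrow : ∃ j : Fin n, a + b < (j : ℕ) ∧ Λ xc j = 1 := by
        by_contra hno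
        push_neg at hno
        have hz : ∀ j, Λ xc j = 0 := by
          intro j
          by_cases hj1 : (j : ℕ) < a + b
          · rw [hreg xc j (Or.inr hj1)]
            exact mixMat_large_small hb xc j hj1 (by omega)
          · by_cases hj2 : (j : ℕ) = a + b
            · have hj : j = xc := Fin.ext (by omega)
              rw [hj]; exact halt2 xc (by omega)
            · exact notone _ (hno j (by omega))
        have hdet : Λ.det = 0 := Matrix.det_eq_zero_of_row_eq_zero xc hz
        rw [Matrix.isUnit_iff_isUnit_det, hdet] at hunit
        simp at hunit
      obtain ⟨j, hcj, hΛj⟩ := hrow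
      have hjlt := j.isLt
      have hc1 : a + b + 1 < n := by omega
      set yc : Fin n := ⟨a + b + 1, hc1⟩ with hycdef
      have hycv : (yc : ℕ) = a + b + 1 := rfl
      have cong1 := cong_submatrix_perm Λ (Equiv.swap j yc)
      have hreg1 := swap_reg hb hreg (i := j) (j := yc) (by omega) (by omega)
      have hsym1 : (Λ.submatrix (Equiv.swap j yc) (Equiv.swap j yc)).IsSymm :=
        Matrix.IsSymm.ext fun p q => by
          simp only [Matrix.submatrix_apply]; exact hsym.apply _ _
      have halt1 : ∀ i : Fin n, a ≤ (i : ℕ) → (Λ.submatrix (Equiv.swap j yc) (Equiv.swap j yc)) i i = 0 := by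
        intro i hi
        simp only [Matrix.submatrix_apply]
        exact halt2 _ (swap_ge j yc (by omega) (by omega) i hi)
      have h01 : (Λ.submatrix (Equiv.swap j yc) (Equiv.swap j yc)) xc yc = 1 := by
        simp only [Matrix.submatrix_apply, Equiv.swap_apply_right]
        rw [Equiv.swap_apply_of_ne_of_ne (by simp only [ne_eq, Fin.ext_iff]; omega)
          (by simp only [ne_eq, Fin.ext_iff]; omega)]
        exact hΛj
      set Λ₁ := Λ.submatrix (Equiv.swap j yc) (Equiv.swap j yc) with hΛ₁
      have hunit1 : IsUnit Λ₁ := cong_isUnit cong1 hunit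
      have h10 : Λ₁ yc xc = 1 := (hsym1.apply xc yc).trans h01
      have h00 : Λ₁ xc xc = 0 := halt1 xc (by omega)
      have h11 : Λ₁ yc yc = 0 := halt1 yc (by omega)
      set Aq : Fin n → ZMod 2 := fun q => if (q : ℕ) ≤ a + b + 1 then 0 else Λ₁ yc q with hAq
      set Bq : Fin n → ZMod 2 := fun q => if (q : ℕ) ≤ a + b + 1 then 0 else Λ₁ xc q with hBq
      set zf : Fin n → ZMod 2 := fun _ => 0 with hzf
      have hM2 : IsUnit (colOp xc yc yc Aq Bq zf) := by
        refine colOp_isUnit _ _ _ _ _ _ ?_ ?_ ?_ <;> intro q hq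
        · by_cases hle : (q : ℕ) ≤ a + b + 1
          · exfalso; apply hq; rw [hAq]; simp only; rw [if_pos hle]
          · rw [Fin.lt_def]; omega
        · by_cases hle : (q : ℕ) ≤ a + b + 1
          · exfalso; apply hq; rw [hBq]; simp only; rw [if_pos hle]
          · rw [Fin.lt_def]; omega
        · exact absurd rfl hq
      set M₂ := colOp xc yc yc Aq Bq zf with hM₂def
      set Λ₂ := M₂ᵀ * Λ₁ * M₂ with hΛ₂
      have key : ∀ p q, Λ₂ p q = Λ₁ p q + Aq q * Λ₁ p xc + Bq q * Λ₁ p yc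
          + Aq p * (Λ₁ xc q + Aq q * Λ₁ xc xc + Bq q * Λ₁ xc yc)
          + Bq p * (Λ₁ yc q + Aq q * Λ₁ yc xc + Bq q * Λ₁ yc yc) := by
        intro p q
        rw [hΛ₂, hM₂def, colOp_conj]
        rw [hzf]
        ring
      have cong2 : Cong Λ₁ Λ₂ := ⟨M₂, hM2, rfl⟩
      have hsym2 : Λ₂.IsSymm := isSymm_conj hsym1 M₂
      have hunit2 : IsUnit Λ₂ := isUnit_conj hunit1 hM2
      have hA0 : ∀ q : Fin n, (q : ℕ) ≤ a + b + 1 → Aq q = 0 := by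
        intro q hqle; rw [hAq]; simp only; rw [if_pos hqle]
      have hB0 : ∀ q : Fin n, (q : ℕ) ≤ a + b + 1 → Bq q = 0 := by
        intro q hqle; rw [hBq]; simp only; rw [if_pos hqle]
      have haux : ∀ p q : Fin n, (p : ℕ) < a + b + 2 → Λ₂ p q = mixMat a n p q := by
        intro p q hp
        rw [key p q]
        by_cases hp1 : (p : ℕ) < a + b
        · have h1 : Λ₁ p xc = 0 := by
            rw [hreg1 p xc (Or.inl hp1)]
            exact mixMat_small_large hb p xc hp1 (by omega)
          have h2 : Λ₁ p yc = 0 := by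
            rw [hreg1 p yc (Or.inl hp1)]
            exact mixMat_small_large hb p yc hp1 (by omega)
          rw [hA0 p (by omega), hB0 p (by omega), h1, h2, hreg1 p q (Or.inl hp1)]
          ring
        · by_cases hp2 : (p : ℕ) = a + b
          · have hpxc : p = xc := Fin.ext (by omega)
            subst hpxc
            rw [hA0 xc (by omega), hB0 xc (by omega), h00, h01, h10, h11]
            by_cases hq1 : (q : ℕ) ≤ a + b + 1
            · rw [hA0 q hq1, hB0 q hq1]
              by_cases hq2 : (q : ℕ) < a + b
              · rw [hreg1 xc q (Or.inr hq2)]; ring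
              · by_cases hq3 : (q : ℕ) = a + b
                · have hqq : q = xc := Fin.ext (by omega)
                  subst hqq
                  rw [h00, mixMat_diag_zero xc (by omega)]; ring
                · have hqq : q = yc := Fin.ext (by omega)
                  subst hqq
                  rw [h01]
                  have hv : mixMat a n xc yc = 1 := by
                    simp only [mixMat, Matrix.of_apply]
                    rw [if_neg (by omega),
                      if_pos ⟨by omega, by simp only [ne_eq, Fin.ext_iff]; omega⟩]
                  rw [hv]; ring
            · have f2 : Bq q = Λ₁ xc q := by rw [hBq]; simp only; rw [if_neg hq1]
              rw [f2]
              have hv : mixMat a n xc q = 0 := by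
                simp only [mixMat, Matrix.of_apply]
                rw [if_neg (by omega), if_neg (by rintro ⟨hd, -⟩; omega)]
              rw [hv]
              generalize Λ₁ xc q = u
              generalize Λ₁ yc q = v
              generalize Aq q = w
              revert u v w; decide
          · have hp3 : (p : ℕ) = a + b + 1 := by omega
            have hpyc : p = yc := Fin.ext (by omega)
            subst hpyc
            rw [hA0 yc (by omega), hB0 yc (by omega), h00, h01, h10, h11]
            by_cases hq1 : (q : ℕ) ≤ a + b + 1
            · rw [hA0 q hq1, hB0 q hq1]
              by_cases hq2 : (q : ℕ) < a + b
              · rw [hreg1 yc q (Or.inr hq2)]; ring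
              · by_cases hq3 : (q : ℕ) = a + b
                · have hqq : q = xc := Fin.ext (by omega)
                  subst hqq
                  rw [h10]
                  have hv : mixMat a n yc xc = 1 := by
                    simp only [mixMat, Matrix.of_apply]
                    rw [if_neg (by omega),
                      if_pos ⟨by omega, by simp only [ne_eq, Fin.ext_iff]; omega⟩]
                  rw [hv]; ring
                · have hqq : q = yc := Fin.ext (by omega)
                  subst hqq
                  rw [h11, mixMat_diag_zero yc (by omega)]; ring
            · have f1 : Aq q = Λ₁ yc q := by rw [hAq]; simp only; rw [if_neg hq1]
              rw [f1]
              have hv : mixMat a n yc q = 0 := by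
                simp only [mixMat, Matrix.of_apply]
                rw [if_neg (by omega), if_neg (by rintro ⟨hd, -⟩; omega)]
              rw [hv]
              generalize Λ₁ yc q = u
              generalize Λ₁ xc q = v
              generalize Bq q = w
              revert u v w; decide
      have hreg2 : ∀ p q : Fin n, ((p : ℕ) < a + (b + 2) ∨ (q : ℕ) < a + (b + 2)) →
          Λ₂ p q = mixMat a n p q := by
        intro p q hpq
        rcases hpq with hp | hq
        · exact haux p q (by omega)
        · rw [hsym2.apply q p, haux q p (by omega)]
          exact (mixMat_isSymm a n).apply p q
      have haltN : ∀ i : Fin n, a ≤ (i : ℕ) → Λ₂ i i = 0 := by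
        intro i hi
        by_cases hic : (i : ℕ) < a + b + 2
        · rw [haux i i hic]; exact mixMat_diag_zero i hi
        · rw [key i i]
          have f1 : Aq i = Λ₁ yc i := by rw [hAq]; simp only; rw [if_neg (by omega)]
          have f2 : Bq i = Λ₁ xc i := by rw [hBq]; simp only; rw [if_neg (by omega)]
          have g1 : Λ₁ i xc = Λ₁ xc i := hsym1.apply xc i
          have g2 : Λ₁ i yc = Λ₁ yc i := hsym1.apply yc i
          rw [f1, f2, g1, g2, h00, h01, h10, h11, halt1 i (by omega)]
          generalize Λ₁ xc i = u
          generalize Λ₁ yc i = v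
          revert u v; decide
      obtain ⟨a', ha'1, ha'2, ha'3, hcong⟩ := IH (m - 2) (by omega) a (b + 2) n Λ₂
        (by omega) (by omega) hsym2 hunit2 hreg2 (fun _ => haltN)
      exact ⟨a', ha'1, ha'2, ha'3, (cong1.trans cong2).trans hcong⟩


lemma fixChain : ∀ m a n, n - a = m → 1 ≤ a → (n - a) % 2 = 0 → Cong (mixMat a n) 1 := by
  intro m
  induction m using Nat.strong_induction_on with
  | _ m IH =>
  intro a n hm ha hpar
  by_cases hn : n ≤ a
  · rw [mixMat_of_ge hn]; exact Cong.refl 1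
  · push_neg at hn
    have h2 : a + 1 < n := by omega
    exact (fixStep ha h2 hpar).trans
      (IH (n - (a + 2)) (by omega) (a + 2) n rfl (by omega) (by omega))

lemma hypMat_symm_entry {n : ℕ} (p q : Fin n) : hypMat n p q = hypMat n q p := by
  rw [← mixMat_zero]
  exact (mixMat_isSymm 0 n).apply q p

lemma hypMat_diag {n : ℕ} (p : Fin n) : hypMat n p p = 0 := by
  simp [hypMat]

end Stmt2Aux

open Stmt2Aux

/-- Every non-degenerate symmetric bilinear form over `F_2` is
congruent to `I_n` or (for even `n`) to `λ_n = hypMat n`; moreover `I_n` admits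
a vector with `v·v = 1` (for `n > 0`) while for `λ_n` every vector satisfies
`v·v = 0`, so the two are not congruent. -/
theorem stmt2 (n : ℕ) (Λ : Matrix (Fin n) (Fin n) (ZMod 2))
    (hsym : Λ.IsSymm) (hnd : IsUnit Λ) :
    ((∃ M : Matrix (Fin n) (Fin n) (ZMod 2), IsUnit M ∧ Mᵀ * Λ * M = 1) ∨
      (n % 2 = 0 ∧
        ∃ M : Matrix (Fin n) (Fin n) (ZMod 2), IsUnit M ∧ Mᵀ * Λ * M = hypMat n)) ∧
    (0 < n → ∃ v : Fin n → ZMod 2, v ⬝ᵥ ((1 : Matrix (Fin n) (Fin n) (ZMod 2)) *ᵥ v) = 1) ∧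
    (n % 2 = 0 → ∀ v : Fin n → ZMod 2, v ⬝ᵥ (hypMat n *ᵥ v) = 0) := by
  refine ⟨?_, ?_, ?_⟩
  · obtain ⟨a', ha'1, ha'2, ha'3, hcong⟩ := mainLemma n 0 0 n Λ (by omega) (by omega)
      hsym hnd (fun p q h => absurd h (by omega)) (fun h => absurd rfl h)
    rcases Nat.eq_zero_or_pos a' with h0 | hpos
    · subst h0
      right
      refine ⟨by omega, ?_⟩
      rwa [mixMat_zero] at hcong
    · left
      exact hcong.trans (fixChain (n - a') a' n rfl hpos (by omega))
  · intro hn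
    refine ⟨fun i => if i = ⟨0, hn⟩ then 1 else 0, ?_⟩
    rw [Matrix.one_mulVec, dotProduct]
    simp only [ite_mul, one_mul, zero_mul, Finset.sum_ite_eq', Finset.mem_univ, if_true,
      if_pos rfl]
  · intro hn v
    rw [dotProduct]
    simp only [Matrix.mulVec, dotProduct, Finset.mul_sum]
    rw [← Finset.sum_product' (f := fun p q => v p * (hypMat n p q * v q))]
    refine Finset.sum_ninvolution Prod.swap ?_ ?_ (fun a => Finset.mem_product.2
      ⟨Finset.mem_univ _, Finset.mem_univ _⟩) (fun a => rfl)
    · intro x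
      have hsymm := hypMat_symm_entry x.2 x.1
      simp only [Prod.swap]
      rw [hsymm]
      generalize v x.1 = s
      generalize v x.2 = t
      generalize hypMat n x.1 x.2 = h
      revert s t h; decide
    · intro x hx
      by_contra hsw
      apply hx
      have h12 : x.2 = x.1 := by
        have := congrArg Prod.fst (not_not.mp (by simpa using hsw))
        exact this
      rw [h12, hypMat_diag]
      ring
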